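/- For all real t with 0 < t ≤ 1/2, one has arcsin(t) - t ≤ 4(1 - 3/π) · arcsin(t) · t². -/

import Mathlib

open Real

private lemma sin_ge_cube_aux (x : ℝ) (hx : 0 ≤ x) : x - x ^ 3 / 6 ≤ Real.sin x := by
  have H : ∀ y : ℝ, HasDerivAt (fun y => Real.sin y - y + y ^ 3 / 6)
      (Real.cos y - 1 + y ^ 2 / 2) y := by
    intro y
    have h2 : HasDerivAt (fun y : ℝ => y ^ 3 / 6) (y ^ 2 / 2) y := by
      have := (hasDerivAt_pow 3 y).div_const 6
      refine this.congr_deriv ?_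
      push_cast; ring
    exact ((Real.hasDerivAt_sin y).sub (hasDerivAt_id y)).add h2
  have hmono : Monotone (fun y => Real.sin y - y + y ^ 3 / 6) := by
    refine monotone_of_deriv_nonneg (fun y => (H y).differentiableAt) (fun y => ?_)
    rw [(H y).deriv]
    nlinarith [Real.one_sub_sq_div_two_le_cos (x := y)]
  have := hmono hx
  simp only [Real.sin_zero] at this
  norm_num at this
  linarith

private lemma case_small_aux (y : ℝ) (hy0 : 0 < y) (hy : y ≤ 0.43) :
    y - Real.sin y ≤ 4 * (1 - 3 / Real.pi) * y * Real.sin y ^ 2 := by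
  have hπ := Real.pi_gt_d6
  have hπ0 : (0 : ℝ) < Real.pi := Real.pi_pos
  have hc : (0.18028 : ℝ) ≤ 4 * (1 - 3 / Real.pi) := by
    have : 3 / Real.pi ≤ 0.95493 := by
      rw [div_le_iff₀ hπ0]; nlinarith
    linarith
  have h1 := sin_ge_cube_aux y hy0.le
  have h2 : Real.sin y < y := Real.sin_lt hy0
  have hu : y ^ 2 ≤ 0.1849 := by nlinarith
  have hy3 : 0 < y ^ 3 := by positivity
  have hp : 0 ≤ y - y ^ 3 / 6 := by nlinarith
  have hs0 : 0 ≤ Real.sin y := le_trans hp h1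
  have hsq : (y - y ^ 3 / 6) ^ 2 ≤ Real.sin y ^ 2 := by nlinarith
  have key : y ^ 3 / 6 ≤ 0.18028 * (y * (y - y ^ 3 / 6) ^ 2) := by
    nlinarith [mul_nonneg (mul_nonneg (sub_nonneg.mpr hu) (sub_nonneg.mpr hu)) hy3.le,
      mul_nonneg (sub_nonneg.mpr hu) hy3.le]
  have step : 0.18028 * (y * (y - y ^ 3 / 6) ^ 2) ≤ 4 * (1 - 3 / Real.pi) * y * Real.sin y ^ 2 := by
    nlinarith [mul_le_mul_of_nonneg_left hsq hy0.le]
  linarith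


private lemma deriv2_core_aux (c z s co : ℝ) (hc_lb : (0.18028:ℝ) ≤ c) (hc_ub : c ≤ 0.180282)
    (hza : (0.43:ℝ) ≤ z) (hzb : z ≤ 0.5236) (hpyth : s ^ 2 + co ^ 2 = 1)
    (hslb : (0.4167:ℝ) ≤ s) (hsub : s ≤ z) (hcolb : (0.862:ℝ) ≤ co) :
    c * (4 * (s * co) + 2 * z * (co ^ 2 - s ^ 2)) - s ≤ 0 := by
  have hCpos : 0 ≤ co ^ 2 - s ^ 2 := by nlinarith
  have hzC : z * (co ^ 2 - s ^ 2) ≤ 0.5236 * (co ^ 2 - s ^ 2) := by nlinarith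
  have hpyth2 : (2 * s * co) ^ 2 + (co ^ 2 - s ^ 2) ^ 2 = 1 := by
    linear_combination (s ^ 2 + co ^ 2 + 1) * hpyth
  have hsq : (2 * s * co + 0.5236 * (co ^ 2 - s ^ 2)) ^ 2 ≤ 1.27415696 := by
    linarith [sq_nonneg (0.5236 * (2 * s * co) - (co ^ 2 - s ^ 2)), hpyth2]
  have hCS : 2 * s * co + 0.5236 * (co ^ 2 - s ^ 2) ≤ 1.1288 := by nlinarith [hsq]
  have hA : 4 * (s * co) + 2 * z * (co ^ 2 - s ^ 2) ≤ 2.2576 := by linarith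
  have hc0 : (0 : ℝ) ≤ c := by linarith
  have h1 := mul_le_mul_of_nonneg_left hA hc0
  have h2 := mul_le_mul_of_nonneg_right hc_ub (show (0:ℝ) ≤ 2.2576 by norm_num)
  nlinarith

private lemma sin_lb_aux (z s : ℝ) (hza : (0.43:ℝ) ≤ z) (hzb : z ≤ 0.5236)
    (h : z - z ^ 3 / 6 ≤ s) : (0.4167:ℝ) ≤ s := by
  have h6 : (0:ℝ) ≤ 6 - (z ^ 2 + 0.43 * z + 0.1849) := by nlinarith
  nlinarith [mul_nonneg (sub_nonneg.mpr hza) h6]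

theorem arcsin_sub_le_four_one_sub_three_div_pi (t : ℝ) (ht0 : 0 < t) (ht1 : t ≤ 1/2) :
    Real.arcsin t - t ≤ 4 * (1 - 3 / Real.pi) * Real.arcsin t * t ^ 2 := by
  have hπ := Real.pi_gt_d6
  have hπ' := Real.pi_lt_d6
  have hπ0 : (0 : ℝ) < Real.pi := Real.pi_pos
  set c : ℝ := 4 * (1 - 3 / Real.pi) with hc
  have hc_lb : (0.18028 : ℝ) ≤ c := by
    have : 3 / Real.pi ≤ 0.95493 := by rw [div_le_iff₀ hπ0]; nlinarith
    rw [hc]; linarith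
  have hc_ub : c ≤ 0.180282 := by
    have : (0.9549295 : ℝ) ≤ 3 / Real.pi := by rw [le_div_iff₀ hπ0]; nlinarith
    rw [hc]; linarith
  set x : ℝ := Real.arcsin t with hxdef
  have hx0 : 0 < x := Real.arcsin_pos.mpr ht0
  have hx6 : x ≤ Real.pi / 6 := by
    have h1 : Real.arcsin t ≤ Real.arcsin (1/2) := Real.monotone_arcsin ht1
    have h2 : Real.arcsin (Real.sin (Real.pi/6)) = Real.pi/6 :=
      Real.arcsin_sin (by linarith) (by linarith)
    rw [Real.sin_pi_div_six] at h2
    rw [hxdef]; rw [h2] at h1; exact h1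
  have hsin : Real.sin x = t := Real.sin_arcsin (by linarith) (by linarith)
  rw [← hsin]
  rcases le_or_gt x 0.43 with hcase | hcase
  · have h := case_small_aux x hx0 hcase
    rw [← hc] at h
    linarith
  · set G : ℝ → ℝ := fun z => c * (z * Real.sin z ^ 2) - z + Real.sin z with hG
    have hG' : ∀ z : ℝ, HasDerivAt G
        (c * (Real.sin z ^ 2 + z * (2 * (Real.sin z * Real.cos z))) - 1 + Real.cos z) z := by
      intro z
      have h2 : HasDerivAt (fun w : ℝ => w * Real.sin w ^ 2)
          (Real.sin z ^ 2 + z * (2 * (Real.sin z * Real.cos z))) z := by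
        refine ((hasDerivAt_id z).mul ((Real.hasDerivAt_sin z).pow 2)).congr_deriv ?_
        simp only [id_eq, pow_one, Pi.pow_apply]; push_cast; ring
      exact ((h2.const_mul c).sub (hasDerivAt_id z)).add (Real.hasDerivAt_sin z)
    have hG'' : ∀ z : ℝ, HasDerivAt
        (fun z => c * (Real.sin z ^ 2 + z * (2 * (Real.sin z * Real.cos z))) - 1 + Real.cos z)
        (c * (4 * (Real.sin z * Real.cos z) + 2 * z * (Real.cos z ^ 2 - Real.sin z ^ 2))
          - Real.sin z) z := by
      intro z
      have h1 : HasDerivAt (fun w : ℝ => Real.sin w ^ 2)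
          (2 * (Real.sin z * Real.cos z)) z := by
        refine ((Real.hasDerivAt_sin z).pow 2).congr_deriv ?_
        push_cast; ring
      have h2 : HasDerivAt (fun w : ℝ => 2 * (Real.sin w * Real.cos w))
          (2 * (Real.cos z ^ 2 - Real.sin z ^ 2)) z := by
        refine (((Real.hasDerivAt_sin z).mul (Real.hasDerivAt_cos z)).const_mul 2).congr_deriv ?_
        ring
      have h3 : HasDerivAt (fun w : ℝ => w * (2 * (Real.sin w * Real.cos w)))
          (2 * (Real.sin z * Real.cos z) + z * (2 * (Real.cos z ^ 2 - Real.sin z ^ 2))) z := by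
        refine ((hasDerivAt_id z).mul h2).congr_deriv ?_
        simp only [id_eq]; ring
      refine ((((h1.add h3).const_mul c).sub_const 1).add (Real.hasDerivAt_cos z)).congr_deriv ?_
      ring
    have hconc : ConcaveOn ℝ (Set.Icc 0.43 (Real.pi / 6)) G := by
      apply concaveOn_of_hasDerivWithinAt2_nonpos (convex_Icc _ _)
        (Continuous.continuousOn (by fun_prop))
        (fun z _ => (hG' z).hasDerivWithinAt)
        (fun z _ => (hG'' z).hasDerivWithinAt)
      intro z hz
      rw [interior_Icc] at hz
      obtain ⟨hz1, hz2⟩ := hz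
      have hz0 : (0 : ℝ) < z := lt_trans (by norm_num) hz1
      have hzb : z ≤ 0.5236 := by nlinarith
      have hza : (0.43 : ℝ) ≤ z := hz1.le
      set s := Real.sin z with hs
      set co := Real.cos z with hco
      have hpyth : s ^ 2 + co ^ 2 = 1 := by
        rw [hs, hco]; exact Real.sin_sq_add_cos_sq z
      have hslb : 0.4167 ≤ s := by
        have h := sin_ge_cube_aux z hz0.le
        rw [← hs] at h
        exact sin_lb_aux z s hza hzb h
      have hsub : s ≤ z := by
        rw [hs]; exact (Real.sin_lt hz0).le
      have hcolb : 0.862 ≤ co := by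
        have h := Real.one_sub_sq_div_two_le_cos (x := z)
        rw [← hco] at h
        nlinarith
      exact deriv2_core_aux c z s co hc_lb hc_ub hza hzb hpyth hslb hsub hcolb
    have hGa : 0 ≤ G (0.43 : ℝ) := by
      have h := case_small_aux 0.43 (by norm_num) (by norm_num)
      rw [← hc] at h
      have hGa' : G (0.43 : ℝ) = c * ((0.43 : ℝ) * Real.sin 0.43 ^ 2) - 0.43 + Real.sin 0.43 := rfl
      rw [hGa']
      linarith
    have hGb : G (Real.pi / 6) = 0 := by
      have : G (Real.pi / 6) =
          c * (Real.pi / 6 * Real.sin (Real.pi / 6) ^ 2) - Real.pi / 6 + Real.sin (Real.pi / 6) :=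
        rfl
      rw [this, Real.sin_pi_div_six, hc]
      field_simp
      ring
    have hmem : x ∈ Set.Icc (0.43 : ℝ) (Real.pi / 6) := ⟨hcase.le, hx6⟩
    have hab : (0.43 : ℝ) ≤ Real.pi / 6 := by linarith
    have hmin := hconc.min_le_of_mem_Icc (Set.left_mem_Icc.mpr hab)
      (Set.right_mem_Icc.mpr hab) hmem
    rw [hGb] at hmin
    have hGx : 0 ≤ G x := le_trans (le_min hGa le_rfl) hmin
    have hGx' : G x = c * (x * Real.sin x ^ 2) - x + Real.sin x := rfl
    rw [hGx'] at hGx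
    nlinarith
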